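/- For d ≥ 4, the minimum over all trees T on d nodes of the size of the equivalence class [T] equals 4, and this minimum is achieved by the path (chain) on d nodes. -/

import Mathlib

/-- A leaf of a graph: a vertex with a unique neighbor. -/
def IsLeaf {d : ℕ} (G : SimpleGraph (Fin d)) (v : Fin d) : Prop :=
  ∃! w, G.Adj v w

/-- A permutation that swaps a set of leaves (no two of which can share a
common neighbor, since the swap is a function) with their unique neighbors,
fixing everything else. -/
def IsLeafSwapPerm {d : ℕ} (G : SimpleGraph (Fin d)) (e : Equiv.Perm (Fin d)) : Prop :=
  (∀ v, e (e v) = v) ∧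
  ∀ v, e v ≠ v → (IsLeaf G v ∧ G.Adj v (e v)) ∨ (IsLeaf G (e v) ∧ G.Adj v (e v))

/-- The graph obtained by relabeling `G` along a permutation. -/
def relabel {d : ℕ} (G : SimpleGraph (Fin d)) (e : Equiv.Perm (Fin d)) :
    SimpleGraph (Fin d) :=
  G.map e.toEmbedding

/-- The equivalence class `[T]`: all graphs obtained from `G` by swapping a set of
leaves (with pairwise distinct neighbors) with their neighbors. -/
def eqClass {d : ℕ} (G : SimpleGraph (Fin d)) : Set (SimpleGraph (Fin d)) :=
  {H | ∃ e : Equiv.Perm (Fin d), IsLeafSwapPerm G e ∧ H = relabel G e}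

namespace LeafSwapAux

variable {d : ℕ}

lemma relabel_adj (G : SimpleGraph (Fin d)) (e : Equiv.Perm (Fin d))
    (he : ∀ v, e (e v) = v) (x y : Fin d) :
    (relabel G e).Adj x y ↔ G.Adj (e x) (e y) := by
  rw [relabel, SimpleGraph.map_adj]
  constructor
  · rintro ⟨p, q, hpq, hp, hq⟩
    simp only [Equiv.coe_toEmbedding] at hp hq
    subst hp; subst hq
    rwa [he, he]
  · intro h
    exact ⟨e x, e y, h, he x, he y⟩

lemma isLeafSwapPerm_one (G : SimpleGraph (Fin d)) : IsLeafSwapPerm G 1 :=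
  ⟨fun _ => rfl, fun _ hv => absurd rfl hv⟩

lemma isLeafSwapPerm_swap (G : SimpleGraph (Fin d)) {u a : Fin d}
    (hl : IsLeaf G u) (hadj : G.Adj u a) :
    IsLeafSwapPerm G (Equiv.swap u a) := by
  refine ⟨fun v => Equiv.swap_apply_self _ _ _, ?_⟩
  intro v hv
  have hv' : v = u ∨ v = a := by
    by_contra hcon
    push_neg at hcon
    exact hv (Equiv.swap_apply_of_ne_of_ne hcon.1 hcon.2)
  rcases hv' with rfl | rfl
  · left
    rw [Equiv.swap_apply_left]
    exact ⟨hl, hadj⟩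
  · right
    rw [Equiv.swap_apply_right]
    exact ⟨hl, hadj.symm⟩

lemma double_spec {u a v b : Fin d} (hua : u ≠ a) (hvb : v ≠ b) (huv : u ≠ v)
    (hub : u ≠ b) (hav : a ≠ v) (hab : a ≠ b) :
    (Equiv.swap u a * Equiv.swap v b) u = a ∧
    (Equiv.swap u a * Equiv.swap v b) a = u ∧
    (Equiv.swap u a * Equiv.swap v b) v = b ∧
    (Equiv.swap u a * Equiv.swap v b) b = v ∧
    ∀ x, x ≠ u → x ≠ a → x ≠ v → x ≠ b → (Equiv.swap u a * Equiv.swap v b) x = x := by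
  simp only [Equiv.Perm.mul_apply]
  refine ⟨?_, ?_, ?_, ?_, ?_⟩
  · rw [Equiv.swap_apply_of_ne_of_ne huv hub, Equiv.swap_apply_left]
  · rw [Equiv.swap_apply_of_ne_of_ne hav hab, Equiv.swap_apply_right]
  · rw [Equiv.swap_apply_left, Equiv.swap_apply_of_ne_of_ne hub.symm hab.symm]
  · rw [Equiv.swap_apply_right, Equiv.swap_apply_of_ne_of_ne huv.symm hav.symm]
  · intro x h1 h2 h3 h4
    rw [Equiv.swap_apply_of_ne_of_ne h3 h4, Equiv.swap_apply_of_ne_of_ne h1 h2]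

lemma double_invol {u a v b : Fin d} (hua : u ≠ a) (hvb : v ≠ b) (huv : u ≠ v)
    (hub : u ≠ b) (hav : a ≠ v) (hab : a ≠ b) :
    ∀ x, (Equiv.swap u a * Equiv.swap v b) ((Equiv.swap u a * Equiv.swap v b) x) = x := by
  obtain ⟨h1, h2, h3, h4, h5⟩ := double_spec hua hvb huv hub hav hab
  intro x
  by_cases hx1 : x = u
  · subst hx1; rw [h1, h2]
  by_cases hx2 : x = a
  · subst hx2; rw [h2, h1]
  by_cases hx3 : x = v
  · subst hx3; rw [h3, h4]
  by_cases hx4 : x = b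
  · subst hx4; rw [h4, h3]
  rw [h5 x hx1 hx2 hx3 hx4, h5 x hx1 hx2 hx3 hx4]

lemma isLeafSwapPerm_double (G : SimpleGraph (Fin d)) {u a v b : Fin d}
    (hlu : IsLeaf G u) (hadju : G.Adj u a) (hlv : IsLeaf G v) (hadjv : G.Adj v b)
    (huv : u ≠ v) (hub : u ≠ b) (hav : a ≠ v) (hab : a ≠ b) :
    IsLeafSwapPerm G (Equiv.swap u a * Equiv.swap v b) := by
  have hua : u ≠ a := hadju.ne
  have hvb : v ≠ b := hadjv.ne
  obtain ⟨h1, h2, h3, h4, h5⟩ := double_spec hua hvb huv hub hav hab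
  refine ⟨double_invol hua hvb huv hub hav hab, ?_⟩
  intro x hx
  by_cases hx1 : x = u
  · subst hx1; rw [h1]; exact Or.inl ⟨hlu, hadju⟩
  by_cases hx2 : x = a
  · subst hx2; rw [h2]; exact Or.inr ⟨hlu, hadju.symm⟩
  by_cases hx3 : x = v
  · subst hx3; rw [h3]; exact Or.inl ⟨hlv, hadjv⟩
  by_cases hx4 : x = b
  · subst hx4; rw [h4]; exact Or.inr ⟨hlv, hadjv.symm⟩
  exact absurd (h5 x hx1 hx2 hx3 hx4) hx

/-- Fingerprint: if `e` fixes `u` and `a`, then in the relabeled graph the only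
neighbor of `u` is still `a`. -/
lemma P_of_fixes (G : SimpleGraph (Fin d)) {e : Equiv.Perm (Fin d)}
    (he : ∀ w, e (e w) = w) {u a : Fin d} (heu : e u = u) (hea : e a = a)
    (huu : ∀ x, G.Adj u x → x = a) :
    ∀ x, (relabel G e).Adj u x → x = a := by
  intro x hx
  rw [relabel_adj G e he, heu] at hx
  have h := huu _ hx
  have : x = e (e x) := (he x).symm
  rw [this, h, hea]

/-- Fingerprint: if `e` sends `u` to `a` and `a` has a neighbor `c ≠ u`,
then in the relabeled graph `u` has a neighbor other than `a`. -/
lemma not_P_of_swap (G : SimpleGraph (Fin d)) {e : Equiv.Perm (Fin d)}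
    (he : ∀ w, e (e w) = w) {u a c : Fin d} (heu : e u = a)
    (hc : G.Adj a c) (hcu : c ≠ u) :
    ¬ (∀ x, (relabel G e).Adj u x → x = a) := by
  intro hP
  have hadj : (relabel G e).Adj u (e c) := by
    rw [relabel_adj G e he, heu, he]; exact hc
  have hec := hP _ hadj
  apply hcu
  have hca : c = e a := by rw [← hec, he]
  rw [hca, ← heu, he]

lemma ne_of_pred {X : Type*} (P : X → Prop) {A B : X} (hA : P A) (hB : ¬P B) : A ≠ B :=
  fun h => hB (h ▸ hA)

lemma closed_walk {G : SimpleGraph (Fin d)} {S : Set (Fin d)}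
    (hS : ∀ x ∈ S, ∀ y, G.Adj x y → y ∈ S) :
    ∀ {x y : Fin d}, G.Walk x y → x ∈ S → y ∈ S := by
  intro x y p
  induction p with
  | nil => exact id
  | cons h _ ih => exact fun hx => ih (hS _ hx _ h)

lemma exists_other (hd3 : 3 ≤ d) (u a : Fin d) : ∃ w : Fin d, w ≠ u ∧ w ≠ a := by
  by_contra hno
  push_neg at hno
  have hsub : (Finset.univ : Finset (Fin d)) ⊆ {u, a} := by
    intro w _
    rcases eq_or_ne w u with rfl | hw
    · exact Finset.mem_insert_self _ _
    · rw [hno w hw]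
      exact Finset.mem_insert_of_mem (Finset.mem_singleton_self _)
  have h1 := Finset.card_le_card hsub
  have h2 : ({u, a} : Finset (Fin d)).card ≤ 2 :=
    le_trans (Finset.card_insert_le _ _) (by simp)
  rw [Finset.card_univ, Fintype.card_fin] at h1
  omega

lemma exists_second_nbr {G : SimpleGraph (Fin d)} (hconn : G.Connected) (hd3 : 3 ≤ d)
    {u a : Fin d} (hadj : G.Adj u a) (huu : ∀ x, G.Adj u x → x = a) :
    ∃ c, G.Adj a c ∧ c ≠ u := by
  by_contra hcon
  push_neg at hcon
  have hclosed : ∀ x ∈ ({u, a} : Set (Fin d)), ∀ y, G.Adj x y → y ∈ ({u, a} : Set (Fin d)) := by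
    rintro x (rfl | rfl) y hy
    · exact Or.inr (huu y hy)
    · exact Or.inl (hcon y hy)
  obtain ⟨w, hw1, hw2⟩ := exists_other hd3 u a
  obtain ⟨p⟩ := hconn.preconnected u w
  rcases closed_walk hclosed p (Or.inl rfl) with h | h
  · exact hw1 h
  · exact hw2 h


lemma isLeaf_iff (G : SimpleGraph (Fin d)) [DecidableRel G.Adj] (v : Fin d) :
    IsLeaf G v ↔ G.degree v = 1 := by
  rw [← SimpleGraph.card_neighborFinset_eq_degree, Finset.card_eq_one]
  constructor
  · rintro ⟨w, hw, hu⟩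
    refine ⟨w, ?_⟩
    ext x
    simp only [SimpleGraph.mem_neighborFinset, Finset.mem_singleton]
    exact ⟨fun h => hu x h, fun h => h ▸ hw⟩
  · rintro ⟨w, hw⟩
    refine ⟨w, ?_, ?_⟩
    · show G.Adj v w
      rw [← SimpleGraph.mem_neighborFinset, hw]
      exact Finset.mem_singleton_self _
    · intro x hx
      have : x ∈ G.neighborFinset v := (SimpleGraph.mem_neighborFinset _ _ _).2 hx
      rwa [hw, Finset.mem_singleton] at this

lemma degree_pos {G : SimpleGraph (Fin d)} [DecidableRel G.Adj]
    (hconn : G.Connected) (hd2 : 2 ≤ d) (v : Fin d) : 1 ≤ G.degree v := by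
  rw [Nat.one_le_iff_ne_zero, ← Nat.pos_iff_ne_zero, SimpleGraph.degree_pos_iff_exists_adj]
  obtain ⟨w, hw⟩ := Fintype.exists_ne_of_one_lt_card (by simp; omega) v
  obtain ⟨p⟩ := hconn.preconnected v w
  cases p with
  | nil => exact absurd rfl hw
  | cons h _ => exact ⟨_, h⟩

lemma sum_deg {G : SimpleGraph (Fin d)} [DecidableRel G.Adj] (hG : G.IsTree) :
    (∑ v, G.degree v) + 2 = 2 * d := by
  rw [SimpleGraph.sum_degrees_eq_twice_card_edges]
  have h := hG.card_edgeFinset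
  rw [Fintype.card_fin] at h
  omega

lemma exists_two_leaves {G : SimpleGraph (Fin d)} (hG : G.IsTree) (hd2 : 2 ≤ d) :
    ∃ x y, x ≠ y ∧ IsLeaf G x ∧ IsLeaf G y := by
  classical
  have hdeg : ∀ v, 1 ≤ G.degree v := degree_pos hG.isConnected hd2
  set L := Finset.univ.filter (fun v => G.degree v = 1) with hL
  have hpt : ∀ v : Fin d, 2 ≤ G.degree v + (if v ∈ L then 1 else 0) := by
    intro v
    by_cases hv : v ∈ L
    · rw [if_pos hv]
      have : G.degree v = 1 := (Finset.mem_filter.mp hv).2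
      omega
    · rw [if_neg hv]
      have h1 := hdeg v
      have h2 : G.degree v ≠ 1 := fun h =>
        hv (Finset.mem_filter.mpr ⟨Finset.mem_univ _, h⟩)
      omega
  have hsum2 : 2 * d ≤ (∑ v, G.degree v) + L.card := by
    have h := Finset.sum_le_sum (fun v (_ : v ∈ Finset.univ) => hpt v)
    rw [Finset.sum_add_distrib, Finset.sum_const, Finset.card_univ, Fintype.card_fin,
      smul_eq_mul, mul_comm] at h
    have h2 : (∑ v : Fin d, (if v ∈ L then 1 else 0)) = L.card := by
      rw [Finset.sum_ite_mem, Finset.univ_inter, Finset.sum_const, smul_eq_mul, mul_one]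
    omega
  have hcard : 1 < L.card := by
    have := sum_deg (G := G) hG
    omega
  obtain ⟨x, hx, y, hy, hxy⟩ := Finset.one_lt_card.mp hcard
  exact ⟨x, y, hxy, (isLeaf_iff G x).mpr (Finset.mem_filter.mp hx).2,
    (isLeaf_iff G y).mpr (Finset.mem_filter.mp hy).2⟩



/-- The two-distinct-leaves situation: the four graphs, their membership in the
equivalence class, and the cardinality of the four-element set. -/
lemma two_leaf_config (G : SimpleGraph (Fin d))
    {u a v b : Fin d} (hua : G.Adj u a) (huu : ∀ x, G.Adj u x → x = a)
    (hvb : G.Adj v b) (hvv : ∀ x, G.Adj v x → x = b) (hab : a ≠ b)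
    {c c' : Fin d} (hc : G.Adj a c) (hcu : c ≠ u) (hc' : G.Adj b c') (hc'v : c' ≠ v) :
    ({relabel G 1, relabel G (Equiv.swap u a), relabel G (Equiv.swap v b),
      relabel G (Equiv.swap u a * Equiv.swap v b)} : Set (SimpleGraph (Fin d)))
      ⊆ eqClass G ∧
    ({relabel G 1, relabel G (Equiv.swap u a), relabel G (Equiv.swap v b),
      relabel G (Equiv.swap u a * Equiv.swap v b)} : Set (SimpleGraph (Fin d))).ncard = 4 := by
  have hune : u ≠ a := hua.ne
  have hvne : v ≠ b := hvb.ne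
  have huv : u ≠ v := fun h => hab ((huu b (h ▸ hvb)).symm)
  have hub : u ≠ b := by
    intro h
    have h2 : G.Adj u v := (h ▸ hvb).symm
    have h3 : v = a := huu v h2
    have h4 : G.Adj v c := h3 ▸ hc
    exact hcu ((hvv c h4).trans h.symm)
  have hav : a ≠ v := by
    intro h
    exact hub (hvv u (h ▸ hua).symm)
  have hlu : IsLeaf G u := ⟨a, hua, huu⟩
  have hlv : IsLeaf G v := ⟨b, hvb, hvv⟩
  obtain ⟨hs1, hs2, hs3, hs4, hs5⟩ := double_spec hune hvne huv hub hav hab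
  have hinv12 := double_invol hune hvne huv hub hav hab
  have hinv1 : ∀ x, Equiv.swap u a (Equiv.swap u a x) = x :=
    fun x => Equiv.swap_apply_self _ _ _
  have hinv2 : ∀ x, Equiv.swap v b (Equiv.swap v b x) = x :=
    fun x => Equiv.swap_apply_self _ _ _
  have hinv0 : ∀ x : Fin d, (1 : Equiv.Perm (Fin d)) ((1 : Equiv.Perm (Fin d)) x) = x :=
    fun _ => rfl
  -- fingerprints
  have P0 : ∀ x, (relabel G 1).Adj u x → x = a := P_of_fixes G hinv0 rfl rfl huu
  have Q0 : ∀ x, (relabel G 1).Adj v x → x = b := P_of_fixes G hinv0 rfl rfl hvv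
  have P1 : ¬ ∀ x, (relabel G (Equiv.swap u a)).Adj u x → x = a :=
    not_P_of_swap G hinv1 (Equiv.swap_apply_left _ _) hc hcu
  have Q1 : ∀ x, (relabel G (Equiv.swap u a)).Adj v x → x = b :=
    P_of_fixes G hinv1 (Equiv.swap_apply_of_ne_of_ne huv.symm hav.symm)
      (Equiv.swap_apply_of_ne_of_ne hub.symm hab.symm) hvv
  have P2 : ∀ x, (relabel G (Equiv.swap v b)).Adj u x → x = a :=
    P_of_fixes G hinv2 (Equiv.swap_apply_of_ne_of_ne huv hub)
      (Equiv.swap_apply_of_ne_of_ne hav hab) huu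
  have Q2 : ¬ ∀ x, (relabel G (Equiv.swap v b)).Adj v x → x = b :=
    not_P_of_swap G hinv2 (Equiv.swap_apply_left _ _) hc' hc'v
  have P3 : ¬ ∀ x, (relabel G (Equiv.swap u a * Equiv.swap v b)).Adj u x → x = a :=
    not_P_of_swap G hinv12 hs1 hc hcu
  have Q3 : ¬ ∀ x, (relabel G (Equiv.swap u a * Equiv.swap v b)).Adj v x → x = b :=
    not_P_of_swap G hinv12 hs3 hc' hc'v
  constructor
  · rintro H (rfl | rfl | rfl | rfl)
    · exact ⟨1, isLeafSwapPerm_one G, rfl⟩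
    · exact ⟨_, isLeafSwapPerm_swap G hlu hua, rfl⟩
    · exact ⟨_, isLeafSwapPerm_swap G hlv hvb, rfl⟩
    · exact ⟨_, isLeafSwapPerm_double G hlu hua hlv hvb huv hub hav hab, rfl⟩
  · have h01 : relabel G 1 ≠ relabel G (Equiv.swap u a) := ne_of_pred (fun H => ∀ x, H.Adj u x → x = a) P0 P1
    have h02 : relabel G 1 ≠ relabel G (Equiv.swap v b) := ne_of_pred (fun H => ∀ x, H.Adj v x → x = b) Q0 Q2
    have h03 : relabel G 1 ≠ relabel G (Equiv.swap u a * Equiv.swap v b) :=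
      ne_of_pred (fun H => ∀ x, H.Adj u x → x = a) P0 P3
    have h12 : relabel G (Equiv.swap u a) ≠ relabel G (Equiv.swap v b) :=
      (ne_of_pred (fun H => ∀ x, H.Adj u x → x = a) P2 P1).symm
    have h13 : relabel G (Equiv.swap u a) ≠ relabel G (Equiv.swap u a * Equiv.swap v b) :=
      ne_of_pred (fun H => ∀ x, H.Adj v x → x = b) Q1 Q3
    have h23 : relabel G (Equiv.swap v b) ≠ relabel G (Equiv.swap u a * Equiv.swap v b) :=
      ne_of_pred (fun H => ∀ x, H.Adj u x → x = a) P2 P3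
    rw [Set.ncard_insert_of_notMem (by simp [h01, h02, h03]) (Set.toFinite _),
      Set.ncard_insert_of_notMem (by simp [h12, h13]) (Set.toFinite _),
      Set.ncard_pair h23]

lemma four_le_of_two (G : SimpleGraph (Fin d))
    {u a v b : Fin d} (hua : G.Adj u a) (huu : ∀ x, G.Adj u x → x = a)
    (hvb : G.Adj v b) (hvv : ∀ x, G.Adj v x → x = b) (hab : a ≠ b)
    {c c' : Fin d} (hc : G.Adj a c) (hcu : c ≠ u) (hc' : G.Adj b c') (hc'v : c' ≠ v) :
    4 ≤ (eqClass G).ncard := by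
  obtain ⟨hsub, hcard⟩ := two_leaf_config G hua huu hvb hvv hab hc hcu hc' hc'v
  calc 4 = _ := hcard.symm
    _ ≤ (eqClass G).ncard := Set.ncard_le_ncard hsub (Set.toFinite _)

lemma four_le_of_star (G : SimpleGraph (Fin d)) {c l1 l2 l3 : Fin d}
    (h12 : l1 ≠ l2) (h13 : l1 ≠ l3) (h23 : l2 ≠ l3)
    (h1 : G.Adj l1 c) (hu1 : ∀ x, G.Adj l1 x → x = c)
    (h2 : G.Adj l2 c) (hu2 : ∀ x, G.Adj l2 x → x = c)
    (h3 : G.Adj l3 c) (hu3 : ∀ x, G.Adj l3 x → x = c) :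
    4 ≤ (eqClass G).ncard := by
  have hc1 : l1 ≠ c := h1.ne
  have hc2 : l2 ≠ c := h2.ne
  have hc3 : l3 ≠ c := h3.ne
  have hinv : ∀ (l : Fin d) x, Equiv.swap l c (Equiv.swap l c x) = x :=
    fun l x => Equiv.swap_apply_self _ _ _
  -- fingerprint : adjacency of c to l_j in relabeled graphs
  have key : ∀ li lj : Fin d, G.Adj li c → (∀ x, G.Adj li x → x = c) → li ≠ lj → lj ≠ c →
      ¬ (relabel G (Equiv.swap li c)).Adj c lj := by
    intro li lj hadj hu hij hjc hAdj
    rw [relabel_adj G _ (hinv li), Equiv.swap_apply_right,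
      Equiv.swap_apply_of_ne_of_ne hij.symm hjc] at hAdj
    exact hjc (hu lj hAdj)
  have key2 : ∀ li : Fin d, G.Adj li c → (relabel G (Equiv.swap li c)).Adj c li := by
    intro li hadj
    rw [relabel_adj G _ (hinv li), Equiv.swap_apply_right, Equiv.swap_apply_left]
    exact hadj
  have key0 : ∀ lj : Fin d, G.Adj lj c → (relabel G 1).Adj c lj := by
    intro lj hadj
    rw [relabel_adj G 1 (fun _ => rfl)]
    exact hadj.symm
  set A0 := relabel G 1
  set A1 := relabel G (Equiv.swap l1 c)
  set A2 := relabel G (Equiv.swap l2 c)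
  set A3 := relabel G (Equiv.swap l3 c)
  have d01 : A0 ≠ A1 := ne_of_pred (fun H => H.Adj c l2) (key0 l2 h2) (key l1 l2 h1 hu1 h12 hc2)
  have d02 : A0 ≠ A2 := ne_of_pred (fun H => H.Adj c l1) (key0 l1 h1) (key l2 l1 h2 hu2 h12.symm hc1)
  have d03 : A0 ≠ A3 := ne_of_pred (fun H => H.Adj c l1) (key0 l1 h1) (key l3 l1 h3 hu3 h13.symm hc1)
  have d12 : A1 ≠ A2 := ne_of_pred (fun H => H.Adj c l1) (key2 l1 h1) (key l2 l1 h2 hu2 h12.symm hc1)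
  have d13 : A1 ≠ A3 := ne_of_pred (fun H => H.Adj c l1) (key2 l1 h1) (key l3 l1 h3 hu3 h13.symm hc1)
  have d23 : A2 ≠ A3 := ne_of_pred (fun H => H.Adj c l2) (key2 l2 h2) (key l3 l2 h3 hu3 h23.symm hc2)
  have hsub : ({A0, A1, A2, A3} : Set (SimpleGraph (Fin d))) ⊆ eqClass G := by
    rintro H (rfl | rfl | rfl | rfl)
    · exact ⟨1, isLeafSwapPerm_one G, rfl⟩
    · exact ⟨_, isLeafSwapPerm_swap G ⟨c, h1, hu1⟩ h1, rfl⟩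
    · exact ⟨_, isLeafSwapPerm_swap G ⟨c, h2, hu2⟩ h2, rfl⟩
    · exact ⟨_, isLeafSwapPerm_swap G ⟨c, h3, hu3⟩ h3, rfl⟩
  have hcard : ({A0, A1, A2, A3} : Set (SimpleGraph (Fin d))).ncard = 4 := by
    rw [Set.ncard_insert_of_notMem (by simp [d01, d02, d03]) (Set.toFinite _),
      Set.ncard_insert_of_notMem (by simp [d12, d13]) (Set.toFinite _),
      Set.ncard_pair d23]
  calc 4 = _ := hcard.symm
    _ ≤ (eqClass G).ncard := Set.ncard_le_ncard hsub (Set.toFinite _)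


lemma third_leaf {G : SimpleGraph (Fin d)} (hG : G.IsTree) (hd : 4 ≤ d)
    {x y c : Fin d} (hxy : x ≠ y)
    (hx : G.Adj x c) (hxu : ∀ w, G.Adj x w → w = c)
    (hy : G.Adj y c) (hyu : ∀ w, G.Adj y w → w = c)
    (honly : ∀ v, IsLeaf G v → v = x ∨ v = y) : False := by
  classical
  have hcx : x ≠ c := hx.ne
  have hcy : y ≠ c := hy.ne
  -- c has a third neighbor z
  obtain ⟨z, hz, hzx, hzy⟩ : ∃ z, G.Adj c z ∧ z ≠ x ∧ z ≠ y := by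
    by_contra hcon
    push_neg at hcon
    have hclosed : ∀ p ∈ ({x, y, c} : Set (Fin d)), ∀ q, G.Adj p q →
        q ∈ ({x, y, c} : Set (Fin d)) := by
      rintro p (rfl | rfl | rfl) q hq
      · exact Or.inr (Or.inr (hxu q hq))
      · exact Or.inr (Or.inr (hyu q hq))
      · by_cases hqx : q = x
        · exact Or.inl hqx
        · exact Or.inr (Or.inl (hcon q hq hqx))
    obtain ⟨w, hw1, hw2, hw3⟩ : ∃ w : Fin d, w ≠ x ∧ w ≠ y ∧ w ≠ c := by
      by_contra hno
      push_neg at hno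
      have hsub : (Finset.univ : Finset (Fin d)) ⊆ {x, y, c} := by
        intro w _
        rcases eq_or_ne w x with rfl | h1
        · exact Finset.mem_insert_self _ _
        rcases eq_or_ne w y with rfl | h2
        · exact Finset.mem_insert_of_mem (Finset.mem_insert_self _ _)
        · rw [hno w h1 h2]
          exact Finset.mem_insert_of_mem (Finset.mem_insert_of_mem (Finset.mem_singleton_self _))
      have h1 := Finset.card_le_card hsub
      have h2 : ({x, y, c} : Finset (Fin d)).card ≤ 3 :=
        le_trans (Finset.card_insert_le _ _)
          (by have := Finset.card_insert_le y ({c} : Finset (Fin d)); simp at this ⊢; omega)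
      rw [Finset.card_univ, Fintype.card_fin] at h1
      omega
    obtain ⟨p⟩ := hG.isConnected.preconnected x w
    rcases closed_walk hclosed p (Or.inl rfl) with h | h | h
    · exact hw1 h
    · exact hw2 h
    · exact hw3 h
  have hzc : z ≠ c := hz.ne'
  -- degree of c is at least 3
  have hdegc : 3 ≤ G.degree c := by
    have hsub : ({x, y, z} : Finset (Fin d)) ⊆ G.neighborFinset c := by
      intro t ht
      rw [SimpleGraph.mem_neighborFinset]
      simp only [Finset.mem_insert, Finset.mem_singleton] at ht
      rcases ht with rfl | rfl | rfl
      · exact hx.symm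
      · exact hy.symm
      · exact hz
    have hcard3 : ({x, y, z} : Finset (Fin d)).card = 3 := by
      rw [Finset.card_insert_of_notMem (by simp [hxy, hzx.symm]),
        Finset.card_insert_of_notMem (by simp [hzy.symm]), Finset.card_singleton]
    rw [← hcard3, ← SimpleGraph.card_neighborFinset_eq_degree]
    exact Finset.card_le_card hsub
  have hdeg : ∀ v, 1 ≤ G.degree v := degree_pos hG.isConnected (by omega)
  have hpt : ∀ v : Fin d, 2 + (if v = c then 1 else 0) ≤
      G.degree v + ((if v = x then 1 else 0) + (if v = y then 1 else 0)) := by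
    intro v
    by_cases hvx : v = x
    · subst hvx
      rw [if_neg hcx, if_pos rfl, if_neg hxy]
      have := hdeg v
      omega
    by_cases hvy : v = y
    · subst hvy
      rw [if_neg hcy, if_neg hvx, if_pos rfl]
      have := hdeg v
      omega
    by_cases hvc : v = c
    · subst hvc
      rw [if_pos rfl, if_neg (fun h => hvx h), if_neg (fun h => hvy h)]
      omega
    · rw [if_neg hvc, if_neg hvx, if_neg hvy]
      have h1 := hdeg v
      have h2 : G.degree v ≠ 1 := by
        intro h
        rcases honly v ((isLeaf_iff G v).mpr h) with h' | h'
        · exact hvx h'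
        · exact hvy h'
      omega
  have hsum := Finset.sum_le_sum (fun v (_ : v ∈ Finset.univ) => hpt v)
  rw [Finset.sum_add_distrib, Finset.sum_add_distrib, Finset.sum_add_distrib,
    Finset.sum_const, Finset.card_univ, Fintype.card_fin, smul_eq_mul, mul_comm] at hsum
  have e1 : (∑ v : Fin d, (if v = c then 1 else 0)) = 1 := by
    rw [Finset.sum_ite_eq' Finset.univ c (fun _ => 1), if_pos (Finset.mem_univ _)]
  have e2 : (∑ v : Fin d, (if v = x then 1 else 0)) = 1 := by
    rw [Finset.sum_ite_eq' Finset.univ x (fun _ => 1), if_pos (Finset.mem_univ _)]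
  have e3 : (∑ v : Fin d, (if v = y then 1 else 0)) = 1 := by
    rw [Finset.sum_ite_eq' Finset.univ y (fun _ => 1), if_pos (Finset.mem_univ _)]
  have hs := sum_deg (G := G) hG
  rw [e1, e2, e3] at hsum
  omega

/-- The main lower bound: any tree on at least 4 vertices has at least 4 graphs
in its equivalence class. -/
lemma four_le_all (G : SimpleGraph (Fin d)) (hG : G.IsTree) (hd : 4 ≤ d) :
    4 ≤ (eqClass G).ncard := by
  obtain ⟨x, y, hxy, hlx, hly⟩ := exists_two_leaves hG (by omega)
  obtain ⟨a, hxa, hxu⟩ := hlx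
  obtain ⟨b, hyb, hyu⟩ := hly
  have hconn := hG.isConnected
  by_cases hab : a = b
  · subst hab
    by_cases hthird : ∃ z, IsLeaf G z ∧ z ≠ x ∧ z ≠ y
    · obtain ⟨z, ⟨cz, hzc, hzu⟩, hzx, hzy⟩ := hthird
      by_cases hcz : cz = a
      · subst hcz
        exact four_le_of_star G hxy hzx.symm hzy.symm hxa hxu hyb hyu hzc hzu
      · obtain ⟨w1, hw1, hw1x⟩ := exists_second_nbr hconn (by omega) hxa hxu
        obtain ⟨w2, hw2, hw2z⟩ := exists_second_nbr hconn (by omega) hzc hzu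
        exact four_le_of_two G hxa hxu hzc hzu (fun h => hcz h.symm) hw1 hw1x hw2 hw2z
    · push_neg at hthird
      exact (third_leaf hG hd hxy hxa hxu hyb hyu
        (fun v hv => by
          by_cases hvx : v = x
          · exact Or.inl hvx
          · exact Or.inr (hthird v hv hvx))).elim
  · obtain ⟨w1, hw1, hw1x⟩ := exists_second_nbr hconn (by omega) hxa hxu
    obtain ⟨w2, hw2, hw2y⟩ := exists_second_nbr hconn (by omega) hyb hyu
    exact four_le_of_two G hxa hxu hyb hyu hab hw1 hw1x hw2 hw2y


open SimpleGraph in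
lemma path_noreach {x y : Fin d} (hxy : x.1 + 1 = y.1) :
    ¬ (pathGraph d \ fromEdgeSet {s(x, y)}).Reachable x y := by
  intro hr
  obtain ⟨p⟩ := hr
  have key : ∀ {z w : Fin d} (_ : (pathGraph d \ fromEdgeSet {s(x, y)}).Walk z w),
      z.1 ≤ x.1 → w.1 ≤ x.1 := by
    intro z w q
    induction q with
    | nil => exact id
    | @cons z z' w h q ih =>
      intro hz
      apply ih
      rw [SimpleGraph.sdiff_adj] at h
      obtain ⟨hp, hne⟩ := h
      have hzz' : z ≠ z' := hp.ne
      rw [SimpleGraph.pathGraph_adj] at hp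
      rcases hp with h1 | h1
      · by_contra hgt
        push_neg at hgt
        have hz1 : z = x := Fin.ext (by omega)
        have hz2 : z' = y := Fin.ext (by omega)
        apply hne
        rw [SimpleGraph.fromEdgeSet_adj]
        subst hz1; subst hz2
        exact ⟨rfl, hzz'⟩
      · omega
  have := key p le_rfl
  omega

lemma path_isTree (hd : 1 ≤ d) : (SimpleGraph.pathGraph d).IsTree := by
  constructor
  · obtain ⟨m, rfl⟩ : ∃ m, d = m + 1 := ⟨d - 1, by omega⟩
    exact SimpleGraph.pathGraph_connected m
  · rw [SimpleGraph.isAcyclic_iff_forall_adj_isBridge]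
    intro x y hxy
    have hxy' := hxy
    rw [SimpleGraph.pathGraph_adj] at hxy'
    rcases hxy' with h | h
    · exact path_noreach h
    · rw [Sym2.eq_swap]
      exact path_noreach h

section PathFour

lemma path_leaf_eq (hd : 4 ≤ d) {w : Fin d} (hw : IsLeaf (SimpleGraph.pathGraph d) w) :
    w = (⟨0, by omega⟩ : Fin d) ∨ w = (⟨d - 1, by omega⟩ : Fin d) := by
  obtain ⟨t, ht, hu⟩ := hw
  by_contra hcon
  push_neg at hcon
  have h1 : w.1 ≠ 0 := fun hh => hcon.1 (Fin.ext hh)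
  have h2 : w.1 ≠ d - 1 := fun hh => hcon.2 (Fin.ext hh)
  have hlt := w.isLt
  have hp : (SimpleGraph.pathGraph d).Adj w ⟨w.1 - 1, by omega⟩ := by
    rw [SimpleGraph.pathGraph_adj]
    right
    show w.1 - 1 + 1 = w.1
    omega
  have hq : (SimpleGraph.pathGraph d).Adj w ⟨w.1 + 1, by omega⟩ := by
    rw [SimpleGraph.pathGraph_adj]
    left
    show w.1 + 1 = w.1 + 1
    rfl
  have e1 := hu _ hp
  have e2 := hu _ hq
  rw [← e2] at e1
  have hval : w.1 - 1 = w.1 + 1 := congrArg Fin.val e1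
  omega

end PathFour


lemma path_classify (hd : 4 ≤ d) {e : Equiv.Perm (Fin d)}
    (he : IsLeafSwapPerm (SimpleGraph.pathGraph d) e) :
    e = 1 ∨ e = Equiv.swap ⟨0, by omega⟩ ⟨1, by omega⟩ ∨
      e = Equiv.swap ⟨d - 1, by omega⟩ ⟨d - 2, by omega⟩ ∨
      e = Equiv.swap ⟨0, by omega⟩ ⟨1, by omega⟩ *
          Equiv.swap ⟨d - 1, by omega⟩ ⟨d - 2, by omega⟩ := by
  obtain ⟨hinv, hmv⟩ := he
  set u : Fin d := ⟨0, by omega⟩ with hu_def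
  set a : Fin d := ⟨1, by omega⟩ with ha_def
  set v : Fin d := ⟨d - 1, by omega⟩ with hv_def
  set b : Fin d := ⟨d - 2, by omega⟩ with hb_def
  have hu_a : u ≠ a := by simp only [hu_def, ha_def, ne_eq, Fin.mk.injEq]; omega
  have huv : u ≠ v := by simp only [hu_def, hv_def, ne_eq, Fin.mk.injEq]; omega
  have hub : u ≠ b := by simp only [hu_def, hb_def, ne_eq, Fin.mk.injEq]; omega
  have hav : a ≠ v := by simp only [ha_def, hv_def, ne_eq, Fin.mk.injEq]; omega
  have hab : a ≠ b := by simp only [ha_def, hb_def, ne_eq, Fin.mk.injEq]; omega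
  have hv_b : v ≠ b := by simp only [hv_def, hb_def, ne_eq, Fin.mk.injEq]; omega
  have huu : ∀ x, (SimpleGraph.pathGraph d).Adj u x → x = a := by
    intro x hx
    rw [SimpleGraph.pathGraph_adj] at hx
    rcases hx with h | h
    · replace h : 0 + 1 = x.1 := h
      exact Fin.ext ((by omega : x.1 = 1) : x.1 = _)
    · replace h : x.1 + 1 = 0 := h
      exact absurd h (by omega)
  have hvv : ∀ x, (SimpleGraph.pathGraph d).Adj v x → x = b := by
    intro x hx
    rw [SimpleGraph.pathGraph_adj] at hx
    rcases hx with h | h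
    · replace h : d - 1 + 1 = x.1 := h
      have := x.isLt
      exact absurd h (by omega)
    · replace h : x.1 + 1 = d - 1 := h
      exact Fin.ext ((by omega : x.1 = d - 2) : x.1 = _)
  have key : ∀ x, e x ≠ x → (x = u ∧ e x = a) ∨ (x = a ∧ e x = u) ∨
      (x = v ∧ e x = b) ∨ (x = b ∧ e x = v) := by
    intro x hx
    rcases hmv x hx with ⟨hleaf, hadj⟩ | ⟨hleaf, hadj⟩
    · rcases path_leaf_eq hd hleaf with rfl | rfl
      · exact Or.inl ⟨rfl, huu _ hadj⟩
      · exact Or.inr (Or.inr (Or.inl ⟨rfl, hvv _ hadj⟩))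
    · rcases path_leaf_eq hd hleaf with h | h
      · exact Or.inr (Or.inl ⟨huu _ (h ▸ hadj).symm, h⟩)
      · exact Or.inr (Or.inr (Or.inr ⟨hvv _ (h ▸ hadj).symm, h⟩))
  by_cases h1 : e u = u <;> by_cases h2 : e v = v
  · refine Or.inl (Equiv.ext fun x => ?_)
    show e x = x
    by_contra hx
    rcases key x hx with ⟨rfl, hxa⟩ | ⟨rfl, hxu⟩ | ⟨rfl, hxb⟩ | ⟨rfl, hxv⟩
    · exact hx h1
    · have h3 : e u = a := by rw [← hinv a, hxu]
      exact hu_a (h1.symm.trans h3)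
    · exact hx h2
    · have h3 : e v = b := by rw [← hinv b, hxv]
      exact hv_b (h2.symm.trans h3)
  · -- e fixes u, moves v : e = swap v b
    have hev : e v = b := by
      rcases key v h2 with ⟨h, _⟩ | ⟨h, _⟩ | ⟨_, h⟩ | ⟨h, _⟩
      · exact absurd h huv.symm
      · exact absurd h hav.symm
      · exact h
      · exact absurd h hv_b
    have heb : e b = v := by rw [← hinv v, hev]
    refine Or.inr (Or.inr (Or.inl (Equiv.ext fun x => ?_)))
    show e x = Equiv.swap v b x
    by_cases hxv : x = v
    · subst hxv; rw [hev, Equiv.swap_apply_left]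
    by_cases hxb : x = b
    · subst hxb; rw [heb, Equiv.swap_apply_right]
    rw [Equiv.swap_apply_of_ne_of_ne hxv hxb]
    by_contra hx
    rcases key x hx with ⟨rfl, hxa⟩ | ⟨rfl, hxu⟩ | ⟨rfl, _⟩ | ⟨rfl, _⟩
    · exact hu_a (h1.symm.trans hxa)
    · have h3 : e u = a := by rw [← hinv a, hxu]
      exact hu_a (h1.symm.trans h3)
    · exact hxv rfl
    · exact hxb rfl
  · -- e moves u, fixes v : e = swap u a
    have heu : e u = a := by
      rcases key u h1 with ⟨_, h⟩ | ⟨h, _⟩ | ⟨h, _⟩ | ⟨h, _⟩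
      · exact h
      · exact absurd h hu_a
      · exact absurd h huv
      · exact absurd h hub
    have hea : e a = u := by rw [← hinv u, heu]
    refine Or.inr (Or.inl (Equiv.ext fun x => ?_))
    show e x = Equiv.swap u a x
    by_cases hxu : x = u
    · subst hxu; rw [heu, Equiv.swap_apply_left]
    by_cases hxa : x = a
    · subst hxa; rw [hea, Equiv.swap_apply_right]
    rw [Equiv.swap_apply_of_ne_of_ne hxu hxa]
    by_contra hx
    rcases key x hx with ⟨rfl, _⟩ | ⟨rfl, _⟩ | ⟨rfl, hxb⟩ | ⟨rfl, hxv⟩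
    · exact hxu rfl
    · exact hxa rfl
    · exact hv_b (h2.symm.trans hxb)
    · have h3 : e v = b := by rw [← hinv b, hxv]
      exact hv_b (h2.symm.trans h3)
  · -- e moves both : e = swap u a * swap v b
    have heu : e u = a := by
      rcases key u h1 with ⟨_, h⟩ | ⟨h, _⟩ | ⟨h, _⟩ | ⟨h, _⟩
      · exact h
      · exact absurd h hu_a
      · exact absurd h huv
      · exact absurd h hub
    have hea : e a = u := by rw [← hinv u, heu]
    have hev : e v = b := by
      rcases key v h2 with ⟨h, _⟩ | ⟨h, _⟩ | ⟨_, h⟩ | ⟨h, _⟩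
      · exact absurd h huv.symm
      · exact absurd h hav.symm
      · exact h
      · exact absurd h hv_b
    have heb : e b = v := by rw [← hinv v, hev]
    obtain ⟨hs1, hs2, hs3, hs4, hs5⟩ := double_spec hu_a hv_b huv hub hav hab
    refine Or.inr (Or.inr (Or.inr (Equiv.ext fun x => ?_)))
    show e x = (Equiv.swap u a * Equiv.swap v b) x
    by_cases hx1 : x = u
    · subst hx1; rw [heu, hs1]
    by_cases hx2 : x = a
    · subst hx2; rw [hea, hs2]
    by_cases hx3 : x = v
    · subst hx3; rw [hev, hs3]
    by_cases hx4 : x = b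
    · subst hx4; rw [heb, hs4]
    rw [hs5 x hx1 hx2 hx3 hx4]
    by_contra hx
    rcases key x hx with ⟨rfl, _⟩ | ⟨rfl, _⟩ | ⟨rfl, _⟩ | ⟨rfl, _⟩
    · exact hx1 rfl
    · exact hx2 rfl
    · exact hx3 rfl
    · exact hx4 rfl

lemma path_ncard (hd : 4 ≤ d) : (eqClass (SimpleGraph.pathGraph d)).ncard = 4 := by
  set G := SimpleGraph.pathGraph d with hG_def
  set u : Fin d := ⟨0, by omega⟩ with hu_def
  set a : Fin d := ⟨1, by omega⟩ with ha_def
  set v : Fin d := ⟨d - 1, by omega⟩ with hv_def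
  set b : Fin d := ⟨d - 2, by omega⟩ with hb_def
  have hab : a ≠ b := by simp only [ha_def, hb_def, ne_eq, Fin.mk.injEq]; omega
  have hua : G.Adj u a := by
    rw [hG_def, SimpleGraph.pathGraph_adj]
    exact Or.inl (show (0 : ℕ) + 1 = 1 from rfl)
  have hvb : G.Adj v b := by
    rw [hG_def, SimpleGraph.pathGraph_adj]
    exact Or.inr (show (d - 2 : ℕ) + 1 = d - 1 by omega)
  have huu : ∀ x, G.Adj u x → x = a := by
    intro x hx
    rw [hG_def, SimpleGraph.pathGraph_adj] at hx
    rcases hx with h | h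
    · replace h : 0 + 1 = x.1 := h
      exact Fin.ext ((by omega : x.1 = 1) : x.1 = _)
    · replace h : x.1 + 1 = 0 := h
      exact absurd h (by omega)
  have hvv : ∀ x, G.Adj v x → x = b := by
    intro x hx
    rw [hG_def, SimpleGraph.pathGraph_adj] at hx
    rcases hx with h | h
    · replace h : d - 1 + 1 = x.1 := h
      have := x.isLt
      exact absurd h (by omega)
    · replace h : x.1 + 1 = d - 1 := h
      exact Fin.ext ((by omega : x.1 = d - 2) : x.1 = _)
  have hc : G.Adj a (⟨2, by omega⟩ : Fin d) := by
    rw [hG_def, SimpleGraph.pathGraph_adj]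
    exact Or.inl (show (1 : ℕ) + 1 = 2 from rfl)
  have hcu : (⟨2, by omega⟩ : Fin d) ≠ u := by
    simp only [hu_def, ne_eq, Fin.mk.injEq]; omega
  have hc' : G.Adj b (⟨d - 3, by omega⟩ : Fin d) := by
    rw [hG_def, SimpleGraph.pathGraph_adj]
    exact Or.inr (show (d - 3 : ℕ) + 1 = d - 2 by omega)
  have hc'v : (⟨d - 3, by omega⟩ : Fin d) ≠ v := by
    simp only [hv_def, ne_eq, Fin.mk.injEq]; omega
  obtain ⟨hsub, hcard⟩ := two_leaf_config G hua huu hvb hvv hab hc hcu hc' hc'v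
  have hsup : eqClass G ⊆
      ({relabel G 1, relabel G (Equiv.swap u a), relabel G (Equiv.swap v b),
        relabel G (Equiv.swap u a * Equiv.swap v b)} : Set (SimpleGraph (Fin d))) := by
    rintro H ⟨e, he, rfl⟩
    rcases path_classify hd he with rfl | rfl | rfl | rfl
    · exact Or.inl rfl
    · exact Or.inr (Or.inl rfl)
    · exact Or.inr (Or.inr (Or.inl rfl))
    · exact Or.inr (Or.inr (Or.inr rfl))
  rw [Set.Subset.antisymm hsup hsub]
  exact hcard


end LeafSwapAux

/-- for `d ≥ 4`, the minimum of `|[T]|` over trees `T` on `d` nodes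
equals `4`, and the minimum is achieved by the path (chain) on `d` nodes. -/
theorem min_card_eqClass (d : ℕ) (hd : 4 ≤ d) :
    IsLeast {n : ℕ | ∃ G : SimpleGraph (Fin d), G.IsTree ∧ (eqClass G).ncard = n} 4 ∧
    (eqClass (SimpleGraph.pathGraph d)).ncard = 4 := by
  refine ⟨⟨⟨SimpleGraph.pathGraph d, LeafSwapAux.path_isTree (by omega),
    LeafSwapAux.path_ncard hd⟩, ?_⟩, LeafSwapAux.path_ncard hd⟩
  rintro n ⟨G, hG, rfl⟩
  exact LeafSwapAux.four_le_all G hG hd
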